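/- Suppose a feeder link satisfies SINR ≥ (C/N)/(1 + I_th) for some I_th > 0, SINR > 1, and C/N > 2. Then the capacity degradation ΔR = 1 − log₂(1+SINR)/log₂(1+C/N) satisfies ΔR ≤ log_{C/N}(1 + I_th), i.e., ΔR ≤ ln(1+I_th)/ln(C/N). -/

import Mathlib

/-- If a feeder link satisfies `SINR ≥ (C/N)/(1+I_th)` with `I_th > 0`, `SINR > 1`
and `C/N > 2`, then the capacity degradation
`ΔR = 1 − log₂(1+SINR)/log₂(1+C/N)` satisfies
`ΔR ≤ log_{C/N}(1+I_th) = ln(1+I_th)/ln(C/N)`. -/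
theorem stmt_5 (sinr cn ith : ℝ) (hith : 0 < ith) (hsinr : 1 < sinr) (hcn : 2 < cn)
    (hreg : cn / (1 + ith) ≤ sinr) :
    1 - Real.logb 2 (1 + sinr) / Real.logb 2 (1 + cn) ≤
      Real.log (1 + ith) / Real.log cn := by
  have hlog2 : Real.log 2 ≠ 0 := by positivity
  have heq : Real.logb 2 (1 + sinr) / Real.logb 2 (1 + cn)
      = Real.log (1 + sinr) / Real.log (1 + cn) := by
    unfold Real.logb
    field_simp
  rw [heq]
  have hcnpos : (0:ℝ) < cn := by linarith
  have hlogcn : 0 < Real.log cn := Real.log_pos (by linarith)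
  have hB : 0 < Real.log (1 + cn) := Real.log_pos (by linarith)
  have hC : 0 < Real.log (1 + ith) := Real.log_pos (by linarith)
  have hBcn : Real.log cn ≤ Real.log (1 + cn) :=
    Real.log_le_log hcnpos (by linarith)
  have hmul : 1 + cn ≤ (1 + ith) * (1 + sinr) := by
    have : cn ≤ sinr * (1 + ith) := by
      rw [div_le_iff₀ (by linarith)] at hreg
      linarith
    nlinarith
  have hlogmul : Real.log (1 + cn) ≤ Real.log (1 + ith) + Real.log (1 + sinr) := by
    calc Real.log (1 + cn) ≤ Real.log ((1 + ith) * (1 + sinr)) :=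
          Real.log_le_log (by linarith) hmul
      _ = Real.log (1 + ith) + Real.log (1 + sinr) :=
          Real.log_mul (by linarith) (by linarith)
  have h1 : 1 - Real.log (1 + sinr) / Real.log (1 + cn)
      ≤ Real.log (1 + ith) / Real.log (1 + cn) := by
    rw [sub_le_iff_le_add, ← add_div, le_div_iff₀ hB, one_mul]
    linarith
  have h2 : Real.log (1 + ith) / Real.log (1 + cn) ≤ Real.log (1 + ith) / Real.log cn :=
    div_le_div_of_nonneg_left hC.le hlogcn hBcn
  linarith
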